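/- Let n be a positive natural number, let Γ := Option Bool (where some b encodes the binary letter b and none encodes the letter #), and let L_n be as defined. Then every nondeterministic finite automaton M over the alphabet Γ with a finite state type Q such that M.accepts = L_n satisfies Fintype.card Q ≥ Nat.choose (2^n) (2^(n−1)). -/

import Mathlib

/-- The length-`n` factors of `w` starting at a position divisible by `n`:
for `(k+1)·n ≤ |w|`, the block `[w.get (k·n), …, w.get ((k+1)·n − 1)]`,
here written as `(w.drop (k·n)).take n`. -/
def subwordN {Γ : Type*} (n : ℕ) (w : List Γ) : Set (List Γ) :=
  {u | ∃ k : ℕ, (k + 1) * n ≤ w.length ∧ u = (w.drop (k * n)).take n}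

/-- The language `L_n` over `Option Bool` (where `some b` encodes the binary letter `b`
and `none` encodes `#`): the finite words in which every binary word of length `n`
occurs as a block starting at a position divisible by `n`. -/
def LnLang (n : ℕ) : Set (List (Option Bool)) :=
  {w | ∀ v : List Bool, v.length = n → v.map some ∈ subwordN n w}

section Aux

variable {Γ : Type*} {n : ℕ}

lemma join_length_aux (L : List (List Γ)) (h : ∀ l ∈ L, l.length = n) :
    L.flatten.length = L.length * n := by
  induction L with
  | nil => simp
  | cons a L ih =>
    simp only [List.flatten_cons, List.length_append, List.length_cons,
      h a (by simp), ih (fun l hl => h l (by simp [hl]))]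
    ring

lemma join_block (L : List (List Γ)) (h : ∀ l ∈ L, l.length = n) (k : ℕ)
    (hk : k < L.length) :
    (L.flatten.drop (k * n)).take n = L.get ⟨k, hk⟩ := by
  induction L generalizing k with
  | nil => simp at hk
  | cons a L ih =>
    cases k with
    | zero =>
      simp only [Nat.zero_mul, List.drop_zero, List.flatten_cons, List.get]
      rw [List.take_append_of_le_length (by simp [h a (by simp)]),
        List.take_of_length_le (by simp [h a (by simp)])]
    | succ k =>
      have ha : a.length = n := h a (by simp)
      have h1 : (k + 1) * n = a.length + k * n := by rw [ha]; ring
      have h2 : List.drop (a.length + k * n) (a ++ L.flatten) = List.drop (k * n) L.flatten := by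
        simp [List.drop_append]
      simp only [List.flatten_cons, h1, h2]
      exact ih (fun l hl => h l (by simp [hl])) k (by simpa using hk)

lemma subword_join (hn : 0 < n) (L : List (List Γ)) (h : ∀ l ∈ L, l.length = n) :
    subwordN n L.flatten = {u | u ∈ L} := by
  ext u
  constructor
  · rintro ⟨k, hk, rfl⟩
    rw [join_length_aux L h] at hk
    have hkl : k < L.length := by
      have := Nat.le_of_mul_le_mul_right hk hn
      omega
    rw [join_block L h k hkl]
    exact List.get_mem L ⟨k, hkl⟩
  · intro hu
    obtain ⟨k, hk⟩ := List.mem_iff_get.mp hu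
    refine ⟨k, ?_, (hk ▸ (join_block L h k k.isLt).symm)⟩
    rw [join_length_aux L h]
    exact Nat.mul_le_mul_right n k.isLt

end Aux

section NFAAux

variable {α : Type*} {σ : Type*} (M : NFA α σ)

lemma mem_evalFrom_iff (p : σ) (S : Set σ) (w : List α) :
    p ∈ M.evalFrom S w ↔ ∃ q ∈ S, p ∈ M.evalFrom {q} w := by
  induction w generalizing S with
  | nil => simp
  | cons a w ih =>
    show p ∈ M.evalFrom (M.stepSet S a) w ↔ ∃ q ∈ S, p ∈ M.evalFrom (M.stepSet {q} a) w
    rw [ih]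
    constructor
    · rintro ⟨r, hr, hp⟩
      rw [NFA.mem_stepSet] at hr
      obtain ⟨q, hq, hr⟩ := hr
      exact ⟨q, hq, (ih _).mpr ⟨r, by rw [NFA.mem_stepSet]; exact ⟨q, rfl, hr⟩, hp⟩⟩
    · rintro ⟨q, hq, hp⟩
      obtain ⟨r, hr, hpr⟩ := (ih _).mp hp
      rw [NFA.mem_stepSet] at hr
      obtain ⟨t, ht, hr⟩ := hr
      have : t = q := by simpa using ht
      subst this
      exact ⟨r, by rw [NFA.mem_stepSet]; exact ⟨t, hq, hr⟩, hpr⟩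

lemma evalFrom_append' (S : Set σ) (x y : List α) :
    M.evalFrom S (x ++ y) = M.evalFrom (M.evalFrom S x) y :=
  List.foldl_append

end NFAAux

/-- Encode a binary vector as a block over `Option Bool`. -/
def encodeBlock {n : ℕ} (v : List.Vector Bool n) : List (Option Bool) :=
  v.toList.map some

noncomputable def concatSet {n : ℕ} (S : Finset (List.Vector Bool n)) :
    List (Option Bool) :=
  (S.toList.map encodeBlock).flatten

lemma concat_mem_iff {n : ℕ} (hn : 0 < n) (S T : Finset (List.Vector Bool n)) :
    concatSet S ++ concatSet T ∈ LnLang n ↔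
      ∀ u : List.Vector Bool n, u ∈ S ∨ u ∈ T := by
  classical
  have hjoin : concatSet S ++ concatSet T
      = ((S.toList ++ T.toList).map encodeBlock).flatten := by
    simp [concatSet, List.map_append, List.flatten_append]
  have hlen : ∀ l ∈ (S.toList ++ T.toList).map encodeBlock, l.length = n := by
    rintro l hl
    simp only [List.mem_map] at hl
    obtain ⟨v, _, rfl⟩ := hl
    simp [encodeBlock]
  constructor
  · intro hw u
    have := hw u.toList (by simp)
    rw [hjoin, subword_join hn _ hlen] at this
    simp only [Set.mem_setOf_eq, List.mem_map, List.mem_append, Finset.mem_toList] at this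
    obtain ⟨v, hv, hvu⟩ := this
    have h2 : v.toList = u.toList :=
      List.map_injective_iff.mpr (Option.some_injective Bool)
        (by simpa [encodeBlock] using hvu)
    have : v = u := List.Vector.toList_injective h2
    exact this ▸ hv
  · intro h v hv
    rw [hjoin, subword_join hn _ hlen]
    simp only [Set.mem_setOf_eq, List.mem_map, List.mem_append, Finset.mem_toList]
    exact ⟨⟨v, hv⟩, by simpa using h ⟨v, hv⟩, by simp [encodeBlock]⟩

/-- Every NFA recognizing `L_n` has at least `C(2^n, 2^(n-1))` states. -/
theorem nfa_for_Ln_lower_bound (n : ℕ) (hn : 0 < n) {Q : Type*} [Fintype Q]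
    (M : NFA (Option Bool) Q) (hM : M.accepts = LnLang n) :
    Nat.choose (2 ^ n) (2 ^ (n - 1)) ≤ Fintype.card Q := by
  classical
  set K := 2 ^ (n - 1) with hK
  have hstate : ∀ S : Finset (List.Vector Bool n),
      ∃ q, q ∈ M.evalFrom M.start (concatSet S) ∧
        ∃ a ∈ M.accept, a ∈ M.evalFrom {q} (concatSet Sᶜ) := by
    intro S
    have hacc : concatSet S ++ concatSet Sᶜ ∈ M.accepts := by
      rw [hM]; refine (concat_mem_iff hn S Sᶜ).mpr ?_
      intro u
      by_cases h : u ∈ S <;> simp [h]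
    rw [NFA.mem_accepts] at hacc
    obtain ⟨a, ha, hmem⟩ := hacc
    rw [evalFrom_append', mem_evalFrom_iff] at hmem
    obtain ⟨q, hq, hqa⟩ := hmem
    exact ⟨q, hq, a, ha, hqa⟩
  let f : {S : Finset (List.Vector Bool n) // S.card = K} → Q :=
    fun S => (hstate S.1).choose
  have hf : Function.Injective f := by
    rintro ⟨S, hS⟩ ⟨T, hT⟩ hST
    apply Subtype.ext
    simp only [f] at hST
    by_contra hne
    obtain ⟨hqT, a, ha, hqa⟩ := (hstate T).choose_spec
    obtain ⟨hqS, -⟩ := (hstate S).choose_spec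
    rw [← hST] at hqa
    have hacc : concatSet S ++ concatSet Tᶜ ∈ M.accepts := by
      rw [NFA.mem_accepts]
      refine ⟨a, ha, ?_⟩
      rw [evalFrom_append', mem_evalFrom_iff]
      exact ⟨_, hqS, hqa⟩
    rw [hM] at hacc; replace hacc := (concat_mem_iff hn S Tᶜ).mp hacc
    have hsub : T ⊆ S := fun u hu => (hacc u).resolve_right (by simp [hu])
    exact hne (Finset.eq_of_subset_of_card_le hsub (by rw [hS, hT])).symm
  have hcard : Fintype.card {S : Finset (List.Vector Bool n) // S.card = K}
      = Nat.choose (2 ^ n) K := by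
    rw [Fintype.card_finset_len, card_vector, Fintype.card_bool]
  exact hcard ▸ Fintype.card_le_of_injective f hf
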